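/- Let c, R > 0 and let u, v, n > 0. Then the matrix G = R·[[c·n/u², 0, −c/u], [0, n/v², −1/v], [−c/u, −1/v, (c+1)/n]] is symmetric and positive semidefinite, and its kernel is exactly the one-dimensional span of the vector (u, v, n). (The ideal gas Hessian metric g = ∇̄d(−S) is a degenerate Hessian metric whose null space is spanned by the Euler vector field.) -/

import Mathlib

open Matrix

/-- The Hessian matrix of the negative ideal gas entropy `−S` at a point
`(u, v, n)` of the positive octant:
`G = R·[[c·n/u², 0, −c/u], [0, n/v², −1/v], [−c/u, −1/v, (c+1)/n]]`. -/
noncomputable def idealGasHessianMatrix (c R u v n : ℝ) : Matrix (Fin 3) (Fin 3) ℝ :=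
  R • !![c * n / u ^ 2, 0, -c / u;
         0, n / v ^ 2, -1 / v;
         -c / u, -1 / v, (c + 1) / n]

/-- **The ideal gas Hessian metric is degenerate with null space spanned by the
Euler vector field.** For `c, R > 0` and `u, v, n > 0`, the matrix `G` is
symmetric and positive semidefinite, and its kernel is exactly the span of the
Euler vector `(u, v, n)`. -/
theorem idealGas_hessian_psd_kernel
    (c R u v n : ℝ) (hc : 0 < c) (hR : 0 < R)
    (hu : 0 < u) (hv : 0 < v) (hn : 0 < n) :
    (idealGasHessianMatrix c R u v n).IsSymm ∧
    (∀ x : Fin 3 → ℝ, 0 ≤ x ⬝ᵥ (idealGasHessianMatrix c R u v n).mulVec x) ∧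
    (∀ x : Fin 3 → ℝ,
      (idealGasHessianMatrix c R u v n).mulVec x = 0 ↔ ∃ t : ℝ, x = t • ![u, v, n]) := by
  refine ⟨?_, ?_, ?_⟩
  · ext i j
    fin_cases i <;> fin_cases j <;>
      simp [idealGasHessianMatrix, Matrix.IsSymm]
  · intro x
    have key : x ⬝ᵥ (idealGasHessianMatrix c R u v n).mulVec x =
        R * (c * n * (x 0 / u - x 2 / n) ^ 2 + n * (x 1 / v - x 2 / n) ^ 2) := by
      simp [idealGasHessianMatrix, Matrix.mulVec, dotProduct,
        Fin.sum_univ_three]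
      field_simp
      ring
    rw [key]
    positivity
  · intro x
    constructor
    · intro h
      have h0 := congrFun h 0
      have h1 := congrFun h 1
      have h2 := congrFun h 2
      simp [idealGasHessianMatrix, Matrix.mulVec, dotProduct,
        Fin.sum_univ_three] at h0 h1 h2
      refine ⟨x 2 / n, ?_⟩
      have hx0 : x 0 = (x 2 / n) * u := by
        have hu2 : (u : ℝ) ^ 2 ≠ 0 := by positivity
        field_simp at h0 ⊢
        have hK : (R * c * u) * (x 0 * n - x 2 * u) = 0 := by linear_combination u * h0
        have hpos : (0:ℝ) < R * c * u := by positivity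
        have := (mul_eq_zero.mp hK).resolve_left hpos.ne'
        linarith
      have hx1 : x 1 = (x 2 / n) * v := by
        have hv2 : (v : ℝ) ^ 2 ≠ 0 := by positivity
        field_simp at h1 ⊢
        have hK : (R * v) * (x 1 * n - x 2 * v) = 0 := by linear_combination v * h1
        have hpos : (0:ℝ) < R * v := by positivity
        have := (mul_eq_zero.mp hK).resolve_left hpos.ne'
        linarith
      funext i
      fin_cases i <;> simp [hx0, hx1]
      field_simp
    · rintro ⟨t, rfl⟩
      funext i
      fin_cases i <;>
        · simp [idealGasHessianMatrix, Matrix.mulVec, dotProduct,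
            Fin.sum_univ_three]
          field_simp
          ring
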